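/- In the unidirectional case, the LP relaxation of the set covering model [uniSCM] is at least as strong as the LP relaxation of the path-indexed model [PIM]: the optimal value z_1 of the LP relaxation of [uniSCM] satisfies z_1 ≥ z_2, where z_2 is the optimal value of the LP relaxation of [PIM]. -/
import Mathlib


open Finset
open scoped Classical

lemma sum_le_sum_biUnion' {α β : Type*} [DecidableEq β] (s : Finset α)
    (t : α → Finset β) (f : β → ℝ) (hf : ∀ b, 0 ≤ f b) :
    ∑ b ∈ s.biUnion t, f b ≤ ∑ a ∈ s, ∑ b ∈ t a, f b := by
  classical
  induction s using Finset.induction_on with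
  | empty => simp
  | @insert a s ha ih =>
    rw [Finset.biUnion_insert, Finset.sum_insert ha]
    have h1 : ∑ b ∈ t a ∪ s.biUnion t, f b ≤ ∑ b ∈ t a, f b + ∑ b ∈ s.biUnion t, f b := by
      have := Finset.sum_union_inter (s₁ := t a) (s₂ := s.biUnion t) (f := f)
      have h2 : 0 ≤ ∑ b ∈ t a ∩ s.biUnion t, f b := Finset.sum_nonneg fun b _ => hf b
      linarith
    exact h1.trans (by linarith)

/-- Proposition (`prop:comparison_SCM_PIM`): for the unidirectional maintenance
scheduling problem (possessions are subintervals `[ℓ_a, ℓ_b]` of the path row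
`ℓ_1, …, ℓ_m`), the optimal value `z₁` of the LP relaxation of the set covering
model [uniSCM] is at least the optimal value `z₂` of the LP relaxation of the
path indexed model [PIM]. -/
theorem comparison_SCM_PIM {ι : Type*} [Fintype ι] (m : ℤ)
    (ℛ : ι → Finset (Finset ℤ)) (hR : ∀ j, (ℛ j).Nonempty)
    (hint : ∀ j, ∀ R ∈ ℛ j, ∃ a b : ℤ, 1 ≤ a ∧ a ≤ b ∧ b ≤ m ∧ R = Finset.Icc a b)
    (z₁ z₂ : ℝ)
    (hz₁ : z₁ = sInf {z : ℝ | ∃ x : ℤ × ℤ → ℝ, (∀ q, 0 ≤ x q) ∧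
      (∀ j : ι, 1 ≤ ∑ q ∈ (Finset.Icc 1 m ×ˢ Finset.Icc 1 m).filter
          (fun q => q.1 ≤ q.2 ∧ ∃ R ∈ ℛ j, R ⊆ Finset.Icc q.1 q.2), x q) ∧
      z = ∑ q ∈ (Finset.Icc 1 m ×ˢ Finset.Icc 1 m).filter (fun q => q.1 ≤ q.2),
            ((q.2 - q.1 + 1 : ℤ) : ℝ) * x q})
    (hz₂ : z₂ = sInf {z : ℝ | ∃ (xR : Finset ℤ → ℝ) (y : ℤ → ℝ),
      (∀ R, 0 ≤ xR R) ∧ (∀ ℓ, 0 ≤ y ℓ) ∧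
      (∀ j : ι, 1 ≤ ∑ R ∈ ℛ j, xR R) ∧
      (∀ j : ι, ∀ R ∈ ℛ j, ∀ ℓ ∈ R, xR R ≤ y ℓ) ∧
      z = ∑ ℓ ∈ Finset.Icc 1 m, y ℓ}) :
    z₂ ≤ z₁ := by
  classical
  set P := Finset.Icc (1 : ℤ) m ×ˢ Finset.Icc (1 : ℤ) m with hP
  set S₁ := {z : ℝ | ∃ x : ℤ × ℤ → ℝ, (∀ q, 0 ≤ x q) ∧
      (∀ j : ι, 1 ≤ ∑ q ∈ P.filter
          (fun q => q.1 ≤ q.2 ∧ ∃ R ∈ ℛ j, R ⊆ Finset.Icc q.1 q.2), x q) ∧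
      z = ∑ q ∈ P.filter (fun q => q.1 ≤ q.2),
            ((q.2 - q.1 + 1 : ℤ) : ℝ) * x q} with hS₁
  set S₂ := {z : ℝ | ∃ (xR : Finset ℤ → ℝ) (y : ℤ → ℝ),
      (∀ R, 0 ≤ xR R) ∧ (∀ ℓ, 0 ≤ y ℓ) ∧
      (∀ j : ι, 1 ≤ ∑ R ∈ ℛ j, xR R) ∧
      (∀ j : ι, ∀ R ∈ ℛ j, ∀ ℓ ∈ R, xR R ≤ y ℓ) ∧
      z = ∑ ℓ ∈ Finset.Icc 1 m, y ℓ} with hS₂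
  have hbdd : BddBelow S₂ := by
    refine ⟨0, fun z hz => ?_⟩
    obtain ⟨xR, y, _, hy, _, _, hzval⟩ := hz
    exact hzval ▸ Finset.sum_nonneg fun ℓ _ => hy ℓ
  -- S₁ is nonempty: take x ≡ 1
  have hne : S₁.Nonempty := by
    refine ⟨∑ q ∈ P.filter (fun q => q.1 ≤ q.2), ((q.2 - q.1 + 1 : ℤ) : ℝ) * (1 : ℝ),
      fun _ => (1 : ℝ), fun _ => zero_le_one, fun j => ?_, rfl⟩
    obtain ⟨R, hRj⟩ := hR j
    obtain ⟨a, b, ha, hab, hbm, hRab⟩ := hint j R hRj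
    have hmem : ((a, b) : ℤ × ℤ) ∈ P.filter
        (fun q => q.1 ≤ q.2 ∧ ∃ R ∈ ℛ j, R ⊆ Finset.Icc q.1 q.2) := by
      simp only [Finset.mem_filter, hP, Finset.mem_product, Finset.mem_Icc]
      exact ⟨⟨⟨ha, hab.trans hbm⟩, ⟨ha.trans hab, hbm⟩⟩, hab, R, hRj, hRab ▸ le_refl _⟩
    calc (1 : ℝ) = ∑ q ∈ {((a,b) : ℤ × ℤ)}, (1 : ℝ) := by simp
      _ ≤ _ := Finset.sum_le_sum_of_subset_of_nonneg
          (Finset.singleton_subset_iff.mpr hmem) (fun _ _ _ => zero_le_one)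
  rw [hz₁, hz₂]
  refine le_csInf hne fun z hz => ?_
  obtain ⟨x, hx, hcov, hzval⟩ := hz
  -- construct PIM solution
  set y : ℤ → ℝ := fun ℓ => ∑ q ∈ P.filter (fun q => q.1 ≤ q.2 ∧ q.1 ≤ ℓ ∧ ℓ ≤ q.2), x q with hy
  set xR : Finset ℤ → ℝ := fun R =>
    ∑ q ∈ P.filter (fun q => q.1 ≤ q.2 ∧ R ⊆ Finset.Icc q.1 q.2), x q with hxR
  refine csInf_le hbdd ⟨xR, y, ?_, ?_, ?_, ?_, ?_⟩
  · exact fun R => Finset.sum_nonneg fun q _ => hx q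
  · exact fun ℓ => Finset.sum_nonneg fun q _ => hx q
  · -- cover constraint
    intro j
    refine (hcov j).trans ?_
    have hsub : P.filter (fun q => q.1 ≤ q.2 ∧ ∃ R ∈ ℛ j, R ⊆ Finset.Icc q.1 q.2) ⊆
        (ℛ j).biUnion (fun R => P.filter (fun q => q.1 ≤ q.2 ∧ R ⊆ Finset.Icc q.1 q.2)) := by
      intro q hq
      simp only [Finset.mem_filter, Finset.mem_biUnion] at hq ⊢
      obtain ⟨hqP, hq12, R, hRj, hRs⟩ := hq
      exact ⟨R, hRj, hqP, hq12, hRs⟩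
    calc ∑ q ∈ P.filter (fun q => q.1 ≤ q.2 ∧ ∃ R ∈ ℛ j, R ⊆ Finset.Icc q.1 q.2), x q
        ≤ ∑ q ∈ (ℛ j).biUnion (fun R => P.filter (fun q => q.1 ≤ q.2 ∧ R ⊆ Finset.Icc q.1 q.2)), x q :=
          Finset.sum_le_sum_of_subset_of_nonneg hsub (fun q _ _ => hx q)
      _ ≤ ∑ R ∈ ℛ j, xR R := sum_le_sum_biUnion' _ _ _ hx
  · -- xR ≤ y
    intro j R hRj ℓ hℓ
    refine Finset.sum_le_sum_of_subset_of_nonneg ?_ (fun q _ _ => hx q)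
    intro q hq
    simp only [Finset.mem_filter] at hq ⊢
    obtain ⟨hqP, hq12, hRs⟩ := hq
    have := hRs hℓ
    rw [Finset.mem_Icc] at this
    exact ⟨hqP, hq12, this.1, this.2⟩
  · -- objective equality
    rw [hzval]
    refine Eq.symm ?_
    have key : ∀ ℓ, y ℓ = ∑ q ∈ P.filter (fun q => q.1 ≤ q.2),
        (if q.1 ≤ ℓ ∧ ℓ ≤ q.2 then x q else 0) := by
      intro ℓ
      simp only [hy, Finset.sum_filter]
      refine Finset.sum_congr rfl fun q _ => ?_
      by_cases h1 : q.1 ≤ q.2 <;> by_cases h2 : q.1 ≤ ℓ ∧ ℓ ≤ q.2 <;> simp [h1, h2]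
    calc ∑ ℓ ∈ Finset.Icc 1 m, y ℓ
        = ∑ ℓ ∈ Finset.Icc 1 m, ∑ q ∈ P.filter (fun q => q.1 ≤ q.2),
            (if q.1 ≤ ℓ ∧ ℓ ≤ q.2 then x q else 0) := by
          exact Finset.sum_congr rfl fun ℓ _ => key ℓ
      _ = ∑ q ∈ P.filter (fun q => q.1 ≤ q.2), ∑ ℓ ∈ Finset.Icc 1 m,
            (if q.1 ≤ ℓ ∧ ℓ ≤ q.2 then x q else 0) := Finset.sum_comm
      _ = ∑ q ∈ P.filter (fun q => q.1 ≤ q.2), ((q.2 - q.1 + 1 : ℤ) : ℝ) * x q := by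
          refine Finset.sum_congr rfl fun q hq => ?_
          simp only [Finset.mem_filter, hP, Finset.mem_product, Finset.mem_Icc] at hq
          obtain ⟨⟨⟨h1a, _⟩, ⟨_, h2m⟩⟩, h12⟩ := hq
          have hfil : (Finset.Icc (1:ℤ) m).filter (fun ℓ => q.1 ≤ ℓ ∧ ℓ ≤ q.2)
              = Finset.Icc q.1 q.2 := by
            ext ℓ
            simp only [Finset.mem_filter, Finset.mem_Icc]
            constructor
            · rintro ⟨_, h⟩; exact h
            · rintro ⟨ha, hb⟩; exact ⟨⟨h1a.trans ha, hb.trans h2m⟩, ha, hb⟩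
          rw [← Finset.sum_filter, hfil, Finset.sum_const, nsmul_eq_mul]
          congr 1
          have h' : (0:ℤ) ≤ q.2 + 1 - q.1 := by linarith
          rw [Int.card_Icc]
          have h2 : ((q.2 + 1 - q.1).toNat : ℝ) = ((q.2 - q.1 + 1 : ℤ) : ℝ) := by
            rw [← Int.cast_natCast, Int.toNat_of_nonneg h']
            push_cast
            ring
          rw [h2]
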